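/- Let Γ be a group such that |Γ : K_n(Γ)| ≤ n^c for all n, where K_n(Γ) is the intersection of the kernels of all irreducible complex representations of Γ of dimension at most n. Then the number of subgroups of Γ of index at most n is at most n^(c² log₂ n). -/

import Mathlib

/-- A matrix representation is irreducible if the only invariant subspaces are `⊥` and `⊤`. -/
def MatIsIrred {G : Type*} [Group G] {ι : Type*} [Fintype ι] [DecidableEq ι]
    (ρ : G →* Matrix.GeneralLinearGroup ι ℂ) : Prop :=
  ∀ W : Submodule ℂ (ι → ℂ),
    (∀ g : G, ∀ v ∈ W, Matrix.mulVec (ρ g : Matrix ι ι ℂ) v ∈ W) → W = ⊥ ∨ W = ⊤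

/-- `Kn Γ n` is the intersection of the kernels of all finite-image irreducible complex
representations of `Γ` of dimension at most `n`. -/
noncomputable def Kn (Γ : Type*) [Group Γ] (n : ℕ) : Subgroup Γ :=
  ⨅ (d : ℕ) (_ : d ≤ n) (ρ : Γ →* Matrix.GeneralLinearGroup (Fin d) ℂ)
    (_ : (Set.range ρ).Finite) (_ : MatIsIrred ρ), ρ.ker


open Matrix

section Aux

/-- If the range of `f` is finite and `ker f ≤ ker g` then the range of `g` is finite. -/
lemma SGaux.finiteRange_of_ker_le {G H K : Type*} [Group G] [Group H] [Group K]
    (f : G →* H) (g : G →* K) (hf : (Set.range f).Finite) (hk : f.ker ≤ g.ker) :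
    (Set.range g).Finite := by
  have h1 : Finite f.range := by
    have he : (f.range : Set H) = Set.range f := rfl
    exact Set.Finite.to_subtype (he ▸ hf)
  have h2 : Finite (G ⧸ f.ker) :=
    Finite.of_equiv _ (QuotientGroup.quotientKerEquivRange f).symm.toEquiv
  have hsub : Set.range g ⊆
      Set.range (QuotientGroup.lift f.ker g (fun x hx => hk hx)) := by
    rintro _ ⟨x, rfl⟩
    exact ⟨QuotientGroup.mk x, rfl⟩
  exact (Set.finite_range _).subset hsub

/-- The group isomorphism between linear automorphisms and the general linear group. -/
noncomputable def SGaux.matGL {V : Type*} [AddCommGroup V] [Module ℂ V]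
    {ι : Type*} [Fintype ι] [DecidableEq ι] (b : Module.Basis ι ℂ V) :
    (V →ₗ[ℂ] V)ˣ ≃* Matrix.GeneralLinearGroup ι ℂ :=
  Units.mapEquiv (LinearMap.toMatrixAlgEquiv b).toRingEquiv.toMulEquiv

lemma SGaux.matGL_comp_eq_one_iff {Γ : Type*} [Group Γ] {V : Type*} [AddCommGroup V]
    [Module ℂ V] {ι : Type*} [Fintype ι] [DecidableEq ι] (b : Module.Basis ι ℂ V)
    (φ : Γ →* (V →ₗ[ℂ] V)ˣ) (g : Γ) :
    ((SGaux.matGL b).toMonoidHom.comp φ) g = 1 ↔ φ g = 1 := by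
  simp [MonoidHom.comp_apply]

lemma SGaux.matGL_comp_finiteRange {Γ : Type*} [Group Γ] {V : Type*} [AddCommGroup V]
    [Module ℂ V] {ι : Type*} [Fintype ι] [DecidableEq ι] (b : Module.Basis ι ℂ V)
    (φ : Γ →* (V →ₗ[ℂ] V)ˣ) (hφ : (Set.range φ).Finite) :
    (Set.range ((SGaux.matGL b).toMonoidHom.comp φ)).Finite := by
  have : Set.range ((SGaux.matGL b).toMonoidHom.comp φ)
      = (SGaux.matGL b) '' (Set.range φ) := by
    rw [← Set.range_comp]; rfl
  rw [this]; exact hφ.image _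

end Aux
open Matrix

namespace SGaux

variable {Γ : Type*} [Group Γ] {d : ℕ}
  (ρ : Γ →* Matrix.GeneralLinearGroup (Fin d) ℂ)
  (W : Submodule ℂ (Fin d → ℂ))
  (hW : ∀ g : Γ, ∀ v ∈ W, Matrix.mulVec (ρ g : Matrix (Fin d) (Fin d) ℂ) v ∈ W)

lemma mulVec_rep_mul (g h : Γ) (v : Fin d → ℂ) :
    mulVec (ρ g : Matrix (Fin d) (Fin d) ℂ) (mulVec (ρ h : Matrix (Fin d) (Fin d) ℂ) v)
      = mulVec (ρ (g * h) : Matrix (Fin d) (Fin d) ℂ) v := by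
  rw [mulVec_mulVec, _root_.map_mul, Units.val_mul]

lemma mulVec_rep_one (v : Fin d → ℂ) :
    mulVec (ρ 1 : Matrix (Fin d) (Fin d) ℂ) v = v := by
  rw [_root_.map_one, Units.val_one, one_mulVec]

/-- The unit of `End W` induced by `ρ g` on an invariant subspace `W`. -/
noncomputable def subUnit (g : Γ) : (W →ₗ[ℂ] W)ˣ where
  val := ((ρ g : Matrix (Fin d) (Fin d) ℂ).mulVecLin).restrict (fun v hv => hW g v hv)
  inv := ((ρ g⁻¹ : Matrix (Fin d) (Fin d) ℂ).mulVecLin).restrict (fun v hv => hW g⁻¹ v hv)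
  val_inv := by
    refine LinearMap.ext fun v => Subtype.ext ?_
    simp only [Module.End.mul_apply, LinearMap.restrict_coe_apply, mulVecLin_apply,
      Module.End.one_apply, mulVec_rep_mul, mul_inv_cancel, mulVec_rep_one]
    show (ρ g : Matrix (Fin d) (Fin d) ℂ) *ᵥ ((ρ g⁻¹ : Matrix (Fin d) (Fin d) ℂ) *ᵥ (v : Fin d → ℂ)) = v
    rw [mulVec_rep_mul, mul_inv_cancel, mulVec_rep_one]
  inv_val := by
    refine LinearMap.ext fun v => Subtype.ext ?_
    simp only [Module.End.mul_apply, LinearMap.restrict_coe_apply, mulVecLin_apply,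
      Module.End.one_apply, mulVec_rep_mul, inv_mul_cancel, mulVec_rep_one]
    show (ρ g⁻¹ : Matrix (Fin d) (Fin d) ℂ) *ᵥ ((ρ g : Matrix (Fin d) (Fin d) ℂ) *ᵥ (v : Fin d → ℂ)) = v
    rw [mulVec_rep_mul, inv_mul_cancel, mulVec_rep_one]

/-- The representation of `Γ` on an invariant subspace `W`. -/
noncomputable def subRep : Γ →* (W →ₗ[ℂ] W)ˣ where
  toFun := subUnit ρ W hW
  map_one' := by
    apply Units.ext
    refine LinearMap.ext fun v => Subtype.ext ?_
    simp [subUnit, mulVec_rep_one]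
  map_mul' g h := by
    apply Units.ext
    refine LinearMap.ext fun v => Subtype.ext ?_
    simp [subUnit, mulVec_rep_mul]
    show _ = (ρ g : Matrix (Fin d) (Fin d) ℂ) *ᵥ ((ρ h : Matrix (Fin d) (Fin d) ℂ) *ᵥ (v : Fin d → ℂ))
    rw [mulVec_mulVec]

lemma subRep_eq_one_iff (g : Γ) :
    subRep ρ W hW g = 1 ↔ ∀ v ∈ W, mulVec (ρ g : Matrix (Fin d) (Fin d) ℂ) v = v := by
  constructor
  · intro h v hv
    have := congrArg (fun u : (W →ₗ[ℂ] W)ˣ => ((u : W →ₗ[ℂ] W) ⟨v, hv⟩ : Fin d → ℂ)) h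
    exact this
  · intro h
    apply Units.ext
    refine LinearMap.ext fun v => Subtype.ext ?_
    exact h v v.2

include hW in
lemma quot_comap (g : Γ) :
    W ≤ W.comap ((ρ g : Matrix (Fin d) (Fin d) ℂ).mulVecLin) := by
  intro v hv
  simpa [Submodule.mem_comap] using hW g v hv

/-- The unit of `End (V ⧸ W)` induced by `ρ g`. -/
noncomputable def quotUnit (g : Γ) : (((Fin d → ℂ) ⧸ W) →ₗ[ℂ] ((Fin d → ℂ) ⧸ W))ˣ where
  val := W.mapQ W ((ρ g : Matrix (Fin d) (Fin d) ℂ).mulVecLin) (quot_comap ρ W hW g)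
  inv := W.mapQ W ((ρ g⁻¹ : Matrix (Fin d) (Fin d) ℂ).mulVecLin) (quot_comap ρ W hW g⁻¹)
  val_inv := by
    apply Submodule.linearMap_qext
    refine LinearMap.ext fun v => ?_
    simp only [LinearMap.coe_comp, Function.comp_apply, Submodule.mkQ_apply,
      Module.End.mul_apply, Submodule.mapQ_apply, mulVecLin_apply, Module.End.one_apply]
    rw [mulVec_rep_mul, mul_inv_cancel, mulVec_rep_one]
  inv_val := by
    apply Submodule.linearMap_qext
    refine LinearMap.ext fun v => ?_
    simp only [LinearMap.coe_comp, Function.comp_apply, Submodule.mkQ_apply,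
      Module.End.mul_apply, Submodule.mapQ_apply, mulVecLin_apply, Module.End.one_apply]
    rw [mulVec_rep_mul, inv_mul_cancel, mulVec_rep_one]

/-- The representation of `Γ` on the quotient by an invariant subspace `W`. -/
noncomputable def quotRep : Γ →* (((Fin d → ℂ) ⧸ W) →ₗ[ℂ] ((Fin d → ℂ) ⧸ W))ˣ where
  toFun := quotUnit ρ W hW
  map_one' := by
    apply Units.ext
    apply Submodule.linearMap_qext
    refine LinearMap.ext fun v => ?_
    simp only [quotUnit, MonoidHom.coe_mk, OneHom.coe_mk, LinearMap.coe_comp,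
      Function.comp_apply, Submodule.mkQ_apply, Submodule.mapQ_apply, mulVecLin_apply,
      Units.val_one, Module.End.one_apply]
    rw [mulVec_rep_one]
  map_mul' g h := by
    apply Units.ext
    apply Submodule.linearMap_qext
    refine LinearMap.ext fun v => ?_
    simp only [quotUnit, Units.val_mul, LinearMap.coe_comp, Function.comp_apply,
      Submodule.mkQ_apply, Module.End.mul_apply, Submodule.mapQ_apply, mulVecLin_apply]
    rw [mulVec_rep_mul]

lemma quotRep_eq_one_iff (g : Γ) :
    quotRep ρ W hW g = 1 ↔
      ∀ v : Fin d → ℂ, mulVec (ρ g : Matrix (Fin d) (Fin d) ℂ) v - v ∈ W := by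
  constructor
  · intro h v
    have := congrArg (fun u : (((Fin d → ℂ) ⧸ W) →ₗ[ℂ] ((Fin d → ℂ) ⧸ W))ˣ =>
      (u : ((Fin d → ℂ) ⧸ W) →ₗ[ℂ] ((Fin d → ℂ) ⧸ W)) (W.mkQ v)) h
    simp only [quotRep, quotUnit, MonoidHom.coe_mk, OneHom.coe_mk, Submodule.mkQ_apply,
      Submodule.mapQ_apply, mulVecLin_apply, Units.val_one, Module.End.one_apply] at this
    rw [← Submodule.Quotient.eq]
    exact this
  · intro h
    apply Units.ext
    apply Submodule.linearMap_qext
    refine LinearMap.ext fun v => ?_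
    simp only [quotRep, quotUnit, MonoidHom.coe_mk, OneHom.coe_mk, LinearMap.coe_comp,
      Function.comp_apply, Submodule.mkQ_apply, Submodule.mapQ_apply, mulVecLin_apply,
      Units.val_one, Module.End.one_apply]
    exact (Submodule.Quotient.eq W).mpr (h v)

end SGaux
open Matrix

namespace SGaux

lemma mem_Kn {Γ : Type*} [Group Γ] {n : ℕ} {x : Γ} :
    x ∈ Kn Γ n ↔ ∀ (d : ℕ), d ≤ n → ∀ (ρ : Γ →* Matrix.GeneralLinearGroup (Fin d) ℂ),
      (Set.range ρ).Finite → MatIsIrred ρ → ρ x = 1 := by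
  simp only [Kn, Subgroup.mem_iInf, MonoidHom.mem_ker]

instance Kn_normal {Γ : Type*} [Group Γ] (n : ℕ) : (Kn Γ n).Normal := by
  constructor
  intro x hx g
  rw [mem_Kn] at hx ⊢
  intro d hd ρ hfin hirr
  rw [_root_.map_mul, _root_.map_mul, hx d hd ρ hfin hirr, mul_one, ← _root_.map_mul,
    mul_inv_cancel, _root_.map_one]

lemma unipotent_eq_one {k : Type*} [Fintype k] [DecidableEq k]
    (M : Matrix k k ℂ) (h2 : (M - 1) * (M - 1) = 0) {m : ℕ} (hm : 0 < m) (hp : M ^ m = 1) :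
    M = 1 := by
  obtain ⟨N, hN⟩ : ∃ N', N' = M - 1 := ⟨_, rfl⟩
  rw [← hN] at h2
  have hMN : M = 1 + N := by rw [hN, add_comm, sub_add_cancel]
  have key : ∀ j : ℕ, M ^ j = 1 + (j : ℕ) • N := by
    intro j
    induction j with
    | zero => simp
    | succ j ih =>
      rw [pow_succ, ih, hMN, mul_add, add_mul, add_mul, one_mul, mul_one, smul_mul_assoc,
        h2, smul_zero, add_zero, succ_nsmul, one_mul, add_assoc]
  have hz : (m : ℕ) • N = 0 := by
    have := (key m).symm.trans hp
    rwa [add_eq_left] at this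
  have hN0 : N = 0 := by
    ext i j
    have := congrFun (congrFun hz i) j
    simp only [Matrix.smul_apply, Matrix.zero_apply, nsmul_eq_mul] at this ⊢
    rcases mul_eq_zero.mp this with h | h
    · exact absurd (Nat.cast_eq_zero.mp h) hm.ne'
    · exact h
  have : M - 1 = 0 := hN ▸ hN0
  rw [sub_eq_zero] at this
  exact this

lemma exists_pow_eq_one {Γ : Type*} [Group Γ] {H : Type*} [Group H] (ρ : Γ →* H)
    (hfin : (Set.range ρ).Finite) (x : Γ) : ∃ m : ℕ, 0 < m ∧ ρ x ^ m = 1 := by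
  haveI : Finite (Set.range ρ) := hfin.to_subtype
  have key : ∀ i j : ℕ, i < j → ρ x ^ i = ρ x ^ j → ∃ m : ℕ, 0 < m ∧ ρ x ^ m = 1 := by
    intro i j hij heq
    refine ⟨j - i, by omega, ?_⟩
    have : ρ x ^ i * ρ x ^ (j - i) = ρ x ^ i * 1 := by
      rw [← pow_add, mul_one, show i + (j - i) = j from by omega]
      exact heq.symm
    exact mul_left_cancel this
  obtain ⟨i, j, hij, hF⟩ := Finite.exists_ne_map_eq_of_infinite
    (fun k : ℕ => (⟨ρ x ^ k, ⟨x ^ k, map_pow ρ x k⟩⟩ : Set.range ρ))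
  have hval : ρ x ^ i = ρ x ^ j := congrArg Subtype.val hF
  rcases lt_or_gt_of_ne hij with h | h
  · exact key i j h hval
  · exact key j i h hval.symm

end SGaux

namespace SGaux

lemma Kn_le_ker {Γ : Type*} [Group Γ] (n : ℕ) :
    ∀ d : ℕ, d ≤ n → ∀ ρ : Γ →* Matrix.GeneralLinearGroup (Fin d) ℂ,
      (Set.range ρ).Finite → Kn Γ n ≤ ρ.ker := by
  intro d
  induction d using Nat.strongRecOn with
  | ind d IH =>
    intro hdn ρ hfin
    by_cases hirr : MatIsIrred ρ
    · intro x hx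
      rw [MonoidHom.mem_ker]
      exact mem_Kn.mp hx d hdn ρ hfin hirr
    · simp only [MatIsIrred, not_forall] at hirr
      obtain ⟨W, hW, hne⟩ := hirr
      push_neg at hne
      obtain ⟨hbot, htop⟩ := hne
      have hd1lt : Module.finrank ℂ W < d := by
        have := Submodule.finrank_lt (K := ℂ) (V := Fin d → ℂ) htop
        rwa [Module.finrank_fin_fun] at this
      have hd1pos : 0 < Module.finrank ℂ W := by
        haveI : Nontrivial W := Submodule.nontrivial_iff_ne_bot.mpr hbot
        exact Module.finrank_pos
      have hsum : Module.finrank ℂ ((Fin d → ℂ) ⧸ W) + Module.finrank ℂ W = d := by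
        have := Submodule.finrank_quotient_add_finrank W
        rwa [Module.finrank_fin_fun] at this
      have hd2lt : Module.finrank ℂ ((Fin d → ℂ) ⧸ W) < d := by omega
      let b₁ := Module.finBasis ℂ W
      let b₂ := Module.finBasis ℂ ((Fin d → ℂ) ⧸ W)
      have hkerSub : ρ.ker ≤ (subRep ρ W hW).ker := by
        intro g hg
        rw [MonoidHom.mem_ker] at hg ⊢
        rw [subRep_eq_one_iff]
        intro v hv
        rw [hg, Units.val_one, one_mulVec]
      have hkerQuot : ρ.ker ≤ (quotRep ρ W hW).ker := by
        intro g hg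
        rw [MonoidHom.mem_ker] at hg ⊢
        rw [quotRep_eq_one_iff]
        intro v
        rw [hg, Units.val_one, one_mulVec, sub_self]
        exact W.zero_mem
      have h1 := IH (Module.finrank ℂ W) hd1lt (le_trans hd1lt.le hdn)
        ((matGL b₁).toMonoidHom.comp (subRep ρ W hW))
        (matGL_comp_finiteRange b₁ _ (finiteRange_of_ker_le ρ _ hfin hkerSub))
      have h2 := IH (Module.finrank ℂ ((Fin d → ℂ) ⧸ W)) hd2lt (le_trans hd2lt.le hdn)
        ((matGL b₂).toMonoidHom.comp (quotRep ρ W hW))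
        (matGL_comp_finiteRange b₂ _ (finiteRange_of_ker_le ρ _ hfin hkerQuot))
      intro x hx
      have e₁ : ∀ v ∈ W, mulVec (ρ x : Matrix (Fin d) (Fin d) ℂ) v = v :=
        (subRep_eq_one_iff ρ W hW x).mp ((matGL_comp_eq_one_iff b₁ _ x).mp (h1 hx))
      have e₂ : ∀ v : Fin d → ℂ, mulVec (ρ x : Matrix (Fin d) (Fin d) ℂ) v - v ∈ W :=
        (quotRep_eq_one_iff ρ W hW x).mp ((matGL_comp_eq_one_iff b₂ _ x).mp (h2 hx))
      rw [MonoidHom.mem_ker]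
      obtain ⟨m, hm, hpow⟩ := exists_pow_eq_one ρ hfin x
      have hpow' : (ρ x : Matrix (Fin d) (Fin d) ℂ) ^ m = 1 := by
        have := congrArg Units.val hpow
        rwa [Units.val_pow_eq_pow_val, Units.val_one] at this
      have hv : ∀ v : Fin d → ℂ,
          mulVec ((ρ x : Matrix (Fin d) (Fin d) ℂ) - 1) v
            = mulVec (ρ x : Matrix (Fin d) (Fin d) ℂ) v - v := by
        intro v; rw [sub_mulVec, one_mulVec]
      have hz : ∀ v : Fin d → ℂ,
          mulVec ((ρ x : Matrix (Fin d) (Fin d) ℂ) - 1)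
            (mulVec ((ρ x : Matrix (Fin d) (Fin d) ℂ) - 1) v) = 0 := by
        intro v
        rw [hv, hv, e₁ _ (e₂ v), sub_self]
      have hNN : ((ρ x : Matrix (Fin d) (Fin d) ℂ) - 1)
          * ((ρ x : Matrix (Fin d) (Fin d) ℂ) - 1) = 0 := by
        have hcol : ∀ (M : Matrix (Fin d) (Fin d) ℂ) (i j : Fin d),
            M.mulVec (Pi.single j 1) i = M i j := by
          intro M i j
          rw [mulVec_single]
          exact mul_one _
        ext i j
        rw [← hcol (((ρ x : Matrix (Fin d) (Fin d) ℂ) - 1)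
          * ((ρ x : Matrix (Fin d) (Fin d) ℂ) - 1)) i j, ← mulVec_mulVec, hz (Pi.single j 1)]
        simp
      have : (ρ x : Matrix (Fin d) (Fin d) ℂ) = 1 := unipotent_eq_one _ hNN hm hpow'
      exact Units.ext (by rw [this, Units.val_one])

end SGaux

namespace SGaux

variable (Γ : Type*) [Group Γ] (X : Type*) [Finite X] [MulAction Γ X]

noncomputable def pσ (g : Γ) (i : Fin (Nat.card X)) : Fin (Nat.card X) :=
  (Finite.equivFin X) (g • (Finite.equivFin X).symm i)

lemma pσ_mul (g h : Γ) (i : Fin (Nat.card X)) :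
    pσ Γ X g (pσ Γ X h i) = pσ Γ X (g * h) i := by
  simp [pσ, mul_smul]

lemma pσ_one (i : Fin (Nat.card X)) : pσ Γ X 1 i = i := by simp [pσ]

/-- The permutation representation of an action, by linear automorphisms. -/
noncomputable def permRep : Γ →* ((Fin (Nat.card X) → ℂ) →ₗ[ℂ] (Fin (Nat.card X) → ℂ))ˣ where
  toFun g :=
    { val := LinearMap.funLeft ℂ ℂ (pσ Γ X g⁻¹)
      inv := LinearMap.funLeft ℂ ℂ (pσ Γ X g)
      val_inv := by
        refine LinearMap.ext fun v => funext fun i => ?_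
        simp only [Module.End.mul_apply, LinearMap.funLeft_apply, Module.End.one_apply]
        rw [pσ_mul, mul_inv_cancel, pσ_one]
      inv_val := by
        refine LinearMap.ext fun v => funext fun i => ?_
        simp only [Module.End.mul_apply, LinearMap.funLeft_apply, Module.End.one_apply]
        rw [pσ_mul, inv_mul_cancel, pσ_one] }
  map_one' := by
    apply Units.ext
    refine LinearMap.ext fun v => funext fun i => ?_
    simp only [LinearMap.funLeft_apply, Units.val_one, Module.End.one_apply, inv_one]
    rw [pσ_one]
  map_mul' g h := by
    apply Units.ext
    refine LinearMap.ext fun v => funext fun i => ?_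
    simp only [Units.val_mul, Module.End.mul_apply, LinearMap.funLeft_apply]
    rw [pσ_mul, _root_.mul_inv_rev]

lemma permRep_eq_one_iff (g : Γ) :
    permRep Γ X g = 1 ↔ ∀ q : X, g • q = q := by
  constructor
  · intro h q
    have h' : ∀ (v : Fin (Nat.card X) → ℂ) (i : Fin (Nat.card X)), v (pσ Γ X g⁻¹ i) = v i := by
      intro v i
      have := congrArg
        (fun u : ((Fin (Nat.card X) → ℂ) →ₗ[ℂ] (Fin (Nat.card X) → ℂ))ˣ =>
          (u : (Fin (Nat.card X) → ℂ) →ₗ[ℂ] (Fin (Nat.card X) → ℂ)) v i) h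
      simpa [permRep, LinearMap.funLeft_apply] using this
    have hfix : ∀ i, pσ Γ X g⁻¹ i = i := by
      intro i
      by_contra hne
      have h2 := h' (Pi.single i 1) i
      rw [Pi.single_eq_of_ne hne, Pi.single_eq_same] at h2
      exact zero_ne_one h2
    have hinv : g⁻¹ • q = q := by
      have h3 := hfix ((Finite.equivFin X) q)
      simpa [pσ] using h3
    calc g • q = g • (g⁻¹ • q) := by rw [hinv]
      _ = q := smul_inv_smul g q
  · intro h
    apply Units.ext
    refine LinearMap.ext fun v => funext fun i => ?_
    have hinv : g⁻¹ • ((Finite.equivFin X).symm i) = (Finite.equivFin X).symm i := by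
      calc g⁻¹ • ((Finite.equivFin X).symm i)
          = g⁻¹ • (g • ((Finite.equivFin X).symm i)) := by rw [h _]
        _ = _ := inv_smul_smul g _
    simp [permRep, LinearMap.funLeft_apply, pσ, hinv]

lemma Kn_le_of_index {Γ : Type*} [Group Γ] {n : ℕ} (H : Subgroup Γ) (h0 : H.index ≠ 0)
    (hle : H.index ≤ n) : Kn Γ n ≤ H := by
  haveI hXfin : Finite (Γ ⧸ H) := by
    rw [Subgroup.index_eq_card] at h0
    exact Nat.finite_of_card_ne_zero h0
  have hdn : Nat.card (Γ ⧸ H) ≤ n := by rwa [Subgroup.index_eq_card] at hle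
  have hkπ : (MulAction.toPermHom Γ (Γ ⧸ H)).ker ≤ (permRep Γ (Γ ⧸ H)).ker := by
    intro g hg
    rw [MonoidHom.mem_ker] at hg ⊢
    rw [permRep_eq_one_iff]
    intro q
    have := Equiv.Perm.ext_iff.mp hg q
    simpa using this
  have hρfin := matGL_comp_finiteRange (Pi.basisFun ℂ (Fin (Nat.card (Γ ⧸ H))))
    (permRep Γ (Γ ⧸ H))
    (finiteRange_of_ker_le (MulAction.toPermHom Γ (Γ ⧸ H)) _ (Set.toFinite _) hkπ)
  have hKn := Kn_le_ker n (Nat.card (Γ ⧸ H)) hdn _ hρfin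
  intro x hx
  have hφ : permRep Γ (Γ ⧸ H) x = 1 :=
    (matGL_comp_eq_one_iff (Pi.basisFun ℂ (Fin (Nat.card (Γ ⧸ H)))) _ x).mp (hKn hx)
  have hfix := (permRep_eq_one_iff Γ (Γ ⧸ H) x).mp hφ ((1 : Γ) : Γ ⧸ H)
  rw [MulAction.Quotient.smul_mk, smul_eq_mul, mul_one] at hfix
  have := QuotientGroup.eq.mp hfix
  rwa [mul_one, inv_mem_iff] at this

end SGaux

namespace SGaux

section Counting

variable {Q : Type*} [Group Q] [Finite Q]

lemma subgroup_eq_of_le_of_card_le {T S : Subgroup Q} (h : T ≤ S)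
    (h2 : Nat.card S ≤ Nat.card T) : T = S := by
  apply SetLike.coe_injective
  apply Set.eq_of_subset_of_ncard_le (SetLike.coe_subset_coe.mpr h) ?_ (Set.toFinite _)
  rwa [← Nat.card_coe_set_eq, ← Nat.card_coe_set_eq]

lemma exists_gen : ∀ (μ : ℕ) (T S : Subgroup Q), T ≤ S → Nat.card S - Nat.card T ≤ μ →
    ∃ (s : ℕ) (f : Fin s → Q), T ⊔ Subgroup.closure (Set.range f) = S ∧
      2 ^ s * Nat.card T ≤ Nat.card S := by
  intro μ
  induction μ with
  | zero =>
    intro T S hTS h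
    have hTS' := Subgroup.card_le_of_le hTS
    have hST : Nat.card S ≤ Nat.card T := by omega
    refine ⟨0, Fin.elim0, ?_, ?_⟩
    · rw [Set.range_eq_empty, Subgroup.closure_empty, sup_bot_eq]
      exact subgroup_eq_of_le_of_card_le hTS hST
    · simpa using hTS'
  | succ μ IH =>
    intro T S hTS h
    rcases le_or_gt (Nat.card S) (Nat.card T) with hST | hST
    · exact IH T S hTS (by omega)
    · have hne : T ≠ S := fun hh => by rw [hh] at hST; omega
      obtain ⟨x, hxS, hxT⟩ := SetLike.exists_of_lt (lt_of_le_of_ne hTS hne)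
      have hT'S : T ⊔ Subgroup.closure {x} ≤ S :=
        sup_le hTS ((Subgroup.closure_le S).mpr (Set.singleton_subset_iff.mpr hxS))
      have hTle : T ≤ T ⊔ Subgroup.closure {x} := le_sup_left
      have hxT' : x ∈ T ⊔ Subgroup.closure {x} :=
        (le_sup_right : Subgroup.closure {x} ≤ _)
          (Subgroup.subset_closure (Set.mem_singleton x))
      have hTT' : T ≠ T ⊔ Subgroup.closure {x} := fun hh => hxT (hh ▸ hxT')
      have hcardlt : Nat.card T < Nat.card (T ⊔ Subgroup.closure {x} : Subgroup Q) :=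
        lt_of_le_of_ne (Subgroup.card_le_of_le hTle)
          (fun hc => hTT' (subgroup_eq_of_le_of_card_le hTle hc.ge))
      have h2T : 2 * Nat.card T ≤ Nat.card (T ⊔ Subgroup.closure {x} : Subgroup Q) := by
        obtain ⟨k, hk⟩ := Subgroup.card_dvd_of_le hTle
        have hTpos : 0 < Nat.card T := Nat.card_pos
        rcases k with _ | _ | k
        · rw [Nat.mul_zero] at hk; omega
        · rw [Nat.mul_one] at hk; omega
        · rw [hk]
          calc 2 * Nat.card T = Nat.card T * 2 := by ring
            _ ≤ Nat.card T * (k + 2) := Nat.mul_le_mul_left _ (by omega)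
      have hmeas : Nat.card S - Nat.card (T ⊔ Subgroup.closure {x} : Subgroup Q) ≤ μ := by
        omega
      obtain ⟨s, f, hsup, hcard⟩ := IH _ S hT'S hmeas
      refine ⟨s + 1, Fin.cons x f, ?_, ?_⟩
      · rw [Fin.range_cons, Set.insert_eq, Subgroup.closure_union, ← sup_assoc, hsup]
      · calc 2 ^ (s + 1) * Nat.card T = 2 ^ s * (2 * Nat.card T) := by ring
          _ ≤ 2 ^ s * Nat.card (T ⊔ Subgroup.closure {x} : Subgroup Q) :=
              Nat.mul_le_mul_left _ h2T
          _ ≤ Nat.card S := hcard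

lemma card_subgroup_le (Q : Type*) [Group Q] [Finite Q] :
    Nat.card (Subgroup Q) ≤ Nat.card Q ^ Nat.log 2 (Nat.card Q) := by
  haveI : Finite (Subgroup Q) :=
    Finite.of_injective (fun S => (S : Set Q)) SetLike.coe_injective
  have hgen : ∀ S : Subgroup Q, ∃ f : Fin (Nat.log 2 (Nat.card Q)) → Q,
      Subgroup.closure (Set.range f) = S := by
    intro S
    obtain ⟨s, f, hsup, hcard⟩ := exists_gen (Nat.card S) ⊥ S bot_le (by simp)
    rw [Subgroup.card_bot, mul_one] at hcard
    have hsQ : 2 ^ s ≤ Nat.card Q :=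
      le_trans hcard (le_trans (Subgroup.card_le_of_le le_top) (le_of_eq Subgroup.card_top))
    have hst : s ≤ Nat.log 2 (Nat.card Q) := Nat.le_log_of_pow_le one_lt_two hsQ
    rw [bot_sup_eq] at hsup
    refine ⟨fun i => if h : (i : ℕ) < s then f ⟨i, h⟩ else 1, ?_⟩
    apply le_antisymm
    · rw [Subgroup.closure_le]
      rintro y ⟨i, rfl⟩
      dsimp only
      split_ifs with hi
      · rw [← hsup]; exact Subgroup.subset_closure (Set.mem_range_self _)
      · exact S.one_mem
    · rw [← hsup]
      refine Subgroup.closure_mono ?_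
      rintro y ⟨j, rfl⟩
      exact ⟨⟨(j : ℕ), lt_of_lt_of_le j.isLt hst⟩, by simp [j.isLt]⟩
  choose F hF using hgen
  have hinj : Function.Injective F := fun a b hab => by rw [← hF a, ← hF b, hab]
  calc Nat.card (Subgroup Q) ≤ Nat.card (Fin (Nat.log 2 (Nat.card Q)) → Q) :=
      Nat.card_le_card_of_injective F hinj
    _ = Nat.card Q ^ Nat.log 2 (Nat.card Q) := by
      rw [Nat.card_fun]
      simp

end Counting

end SGaux

/-- If `|Γ : K_n(Γ)| ≤ n^c` for all `n ≥ 1`, then the number of subgroups of `Γ` of index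
at most `n` is at most `n^(c² log₂ n)`. -/
theorem subgroup_growth_of_representation_type {Γ : Type*} [Group Γ] (c : ℝ)
    (hK : ∀ n : ℕ, 1 ≤ n → (Kn Γ n).FiniteIndex ∧ ((Kn Γ n).index : ℝ) ≤ (n : ℝ) ^ c)
    (n : ℕ) (hn : 1 ≤ n) :
    (Nat.card {K : Subgroup Γ // K.index ≠ 0 ∧ K.index ≤ n} : ℝ) ≤
      (n : ℝ) ^ (c ^ 2 * Real.logb 2 n) := by
  classical
  obtain ⟨hFI, hle⟩ := hK n hn
  haveI : (Kn Γ n).Normal := SGaux.Kn_normal n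
  haveI hQfin : Finite (Γ ⧸ Kn Γ n) := by
    have h0 : Nat.card (Γ ⧸ Kn Γ n) ≠ 0 := by
      rw [← Subgroup.index_eq_card]; exact hFI.index_ne_zero
    exact Nat.finite_of_card_ne_zero h0
  haveI : Finite (Subgroup (Γ ⧸ Kn Γ n)) :=
    Finite.of_injective (fun S => (S : Set (Γ ⧸ Kn Γ n))) SetLike.coe_injective
  have hinj : Function.Injective
      (fun K : {K : Subgroup Γ // K.index ≠ 0 ∧ K.index ≤ n} =>
        Subgroup.map (QuotientGroup.mk' (Kn Γ n)) K.1) := by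
    intro K₁ K₂ hK12
    have h1 := congrArg (Subgroup.comap (QuotientGroup.mk' (Kn Γ n))) hK12
    simp only [Subgroup.comap_map_eq, QuotientGroup.ker_mk'] at h1
    rw [sup_eq_left.mpr (SGaux.Kn_le_of_index K₁.1 K₁.2.1 K₁.2.2),
      sup_eq_left.mpr (SGaux.Kn_le_of_index K₂.1 K₂.2.1 K₂.2.2)] at h1
    exact Subtype.ext h1
  have step1 : Nat.card {K : Subgroup Γ // K.index ≠ 0 ∧ K.index ≤ n}
      ≤ Nat.card (Subgroup (Γ ⧸ Kn Γ n)) := Nat.card_le_card_of_injective _ hinj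
  have step2 := SGaux.card_subgroup_le (Γ ⧸ Kn Γ n)
  rw [← Subgroup.index_eq_card] at step2
  set m := (Kn Γ n).index with hm
  set t := Nat.log 2 m with ht
  have hnat : Nat.card {K : Subgroup Γ // K.index ≠ 0 ∧ K.index ≤ n} ≤ m ^ t :=
    le_trans step1 step2
  have hm1 : 1 ≤ m := Nat.one_le_iff_ne_zero.mpr hFI.index_ne_zero
  have hn1R : (1 : ℝ) ≤ (n : ℝ) := by exact_mod_cast hn
  have hexp0 : 0 ≤ c ^ 2 * Real.logb 2 n :=
    mul_nonneg (sq_nonneg c) (Real.logb_nonneg one_lt_two hn1R)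
  have hRHS1 : (1 : ℝ) ≤ (n : ℝ) ^ (c ^ 2 * Real.logb 2 n) := by
    calc (1:ℝ) = (n : ℝ) ^ (0:ℝ) := (Real.rpow_zero _).symm
      _ ≤ _ := Real.rpow_le_rpow_of_exponent_le hn1R hexp0
  rcases eq_or_lt_of_le hm1 with hm1' | hm2
  · have hmt : m ^ t = 1 := by rw [← hm1']; exact one_pow t
    calc (Nat.card {K : Subgroup Γ // K.index ≠ 0 ∧ K.index ≤ n} : ℝ)
        ≤ ((m ^ t : ℕ) : ℝ) := by exact_mod_cast hnat
      _ = 1 := by rw [hmt]; norm_num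
      _ ≤ _ := hRHS1
  · have hm2' : (2 : ℝ) ≤ (m : ℝ) := by exact_mod_cast hm2
    have hmR : (m : ℝ) ≤ (n : ℝ) ^ c := hle
    have hn2 : (2 : ℝ) ≤ (n : ℝ) := by
      by_contra hcon
      push_neg at hcon
      have hn1 : n = 1 := by
        have : n < 2 := by exact_mod_cast hcon
        omega
      rw [hn1] at hmR
      rw [Nat.cast_one, Real.one_rpow] at hmR
      linarith
    have hc0 : 0 < c := by
      by_contra hc
      push_neg at hc
      have hcc : (n : ℝ) ^ c ≤ (n : ℝ) ^ (0:ℝ) :=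
        Real.rpow_le_rpow_of_exponent_le (by linarith) hc
      rw [Real.rpow_zero] at hcc
      linarith
    have hmpos : (0:ℝ) < (m : ℝ) := by linarith
    have h2t : ((2:ℝ)) ^ (t:ℕ) ≤ (m : ℝ) := by
      have := Nat.pow_log_le_self 2 (show m ≠ 0 by omega)
      rw [ht]
      exact_mod_cast this
    have hlog2 : (0:ℝ) < Real.log 2 := Real.log_pos one_lt_two
    have htlogb : (t : ℝ) ≤ Real.logb 2 (m : ℝ) := by
      rw [Real.logb, le_div_iff₀ hlog2]
      calc (t : ℝ) * Real.log 2 = Real.log ((2:ℝ) ^ (t:ℕ)) := by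
            rw [Real.log_pow]
        _ ≤ Real.log (m : ℝ) := Real.log_le_log (by positivity) h2t
    have hlogbm : Real.logb 2 (m : ℝ) ≤ c * Real.logb 2 (n : ℝ) := by
      have hlogm : Real.log (m : ℝ) ≤ c * Real.log (n : ℝ) := by
        have := Real.log_le_log hmpos hmR
        rwa [Real.log_rpow (by linarith : (0:ℝ) < (n:ℝ))] at this
      calc Real.logb 2 (m : ℝ) = Real.log (m : ℝ) / Real.log 2 := rfl
        _ ≤ (c * Real.log (n : ℝ)) / Real.log 2 := by gcongr
        _ = c * Real.logb 2 (n : ℝ) := by rw [Real.logb]; ring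
    have hct : c * (t : ℝ) ≤ c ^ 2 * Real.logb 2 (n : ℝ) := by
      calc c * (t : ℝ) ≤ c * (c * Real.logb 2 (n : ℝ)) :=
            mul_le_mul_of_nonneg_left (le_trans htlogb hlogbm) hc0.le
        _ = c ^ 2 * Real.logb 2 (n : ℝ) := by ring
    calc (Nat.card {K : Subgroup Γ // K.index ≠ 0 ∧ K.index ≤ n} : ℝ)
        ≤ ((m ^ t : ℕ) : ℝ) := by exact_mod_cast hnat
      _ = (m : ℝ) ^ (t : ℝ) := by rw [Nat.cast_pow, Real.rpow_natCast]
      _ ≤ ((n : ℝ) ^ c) ^ (t : ℝ) :=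
          Real.rpow_le_rpow (by positivity) hmR (by positivity)
      _ = (n : ℝ) ^ (c * (t : ℝ)) := (Real.rpow_mul (by positivity) c (t : ℝ)).symm
      _ ≤ (n : ℝ) ^ (c ^ 2 * Real.logb 2 n) := Real.rpow_le_rpow_of_exponent_le hn1R hct
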